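/- Weighted Rejection Sampling is fair: if each M-subset M with Σ_{m∈M} w_m ≥ α is chosen with probability C·Σ_{j∈M} p_j (and probability 0 otherwise), where p_i = (w_i/C_i(α)) / Σ_j (w_j/C_j(α)) and C_i(α) is the number of M-subsets containing i with total weight ≥ α, and participant i ∈ M receives voting power p_i / Σ_{j∈M} p_j, then the expected voting power of each participant i equals w_i (for the appropriate normalizing constant C). -/

import Mathlib

open Finset

/-- The number of M-subsets containing `i` with total weight at least `α`. -/
noncomputable def Calpha (N M : ℕ) (w : Fin N → ℝ) (α : ℝ) (i : Fin N) : ℕ :=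
  ((Finset.univ.powersetCard M).filter
    (fun 𝓜 => i ∈ 𝓜 ∧ α ≤ ∑ m ∈ 𝓜, w m)).card

/-- Weighted Rejection Sampling is fair. With
p_i = (w_i/C_i(α)) / Σ_j (w_j/C_j(α)), a valid committee 𝓜 (of size M, weight ≥ α) chosen
with probability C·Σ_{j∈𝓜} p_j (probabilities summing to 1), and member i of 𝓜 receiving
voting power p_i/Σ_{j∈𝓜} p_j, every participant's expected voting power equals its weight. -/
theorem stmt_8 (N M : ℕ) (hM : 2 < M) (hMN : M < N) (α : ℝ) (hα0 : 0 < α) (hα1 : α < 1)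
    (w : Fin N → ℝ) (hw : ∀ i, 0 < w i) (hwsum : ∑ i, w i = 1)
    (hC : ∀ i, 0 < Calpha N M w α i)
    (p : Fin N → ℝ)
    (hp : ∀ i, p i = (w i / (Calpha N M w α i : ℝ)) /
      ∑ j, w j / (Calpha N M w α j : ℝ))
    (C : ℝ)
    (hnorm : ∑ 𝓜 ∈ (Finset.univ.powersetCard M).filter (fun 𝓜 => α ≤ ∑ m ∈ 𝓜, w m),
        C * ∑ j ∈ 𝓜, p j = 1) :
    ∀ i : Fin N,
      ∑ 𝓜 ∈ (Finset.univ.powersetCard M).filter (fun 𝓜 => α ≤ ∑ m ∈ 𝓜, w m),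
          (C * ∑ j ∈ 𝓜, p j) *
            (if i ∈ 𝓜 then p i / ∑ j ∈ 𝓜, p j else 0)
        = w i := by
  have hN : 0 < N := lt_trans (lt_trans (by norm_num) hM) hMN
  haveI : Nonempty (Fin N) := ⟨⟨0, hN⟩⟩
  set S := ∑ j, w j / (Calpha N M w α j : ℝ) with hSdef
  have hS : 0 < S := by
    apply Finset.sum_pos
    · intro j _
      exact div_pos (hw j) (by exact_mod_cast hC j)
    · exact Finset.univ_nonempty
  have hppos : ∀ j, 0 < p j := by
    intro j
    rw [hp]
    exact div_pos (div_pos (hw j) (by exact_mod_cast hC j)) hS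
  set F := (Finset.univ.powersetCard M).filter (fun 𝓜 => α ≤ ∑ m ∈ 𝓜, w m) with hF
  have key : ∀ k : Fin N, ∑ 𝓜 ∈ F, (if k ∈ 𝓜 then p k else 0)
      = p k * (Calpha N M w α k : ℝ) := by
    intro k
    rw [← Finset.sum_filter, Finset.sum_const, nsmul_eq_mul, mul_comm]
    congr 2
    unfold Calpha
    rw [hF, Finset.filter_filter]
    congr 1
    ext 𝓜
    simp only [Finset.mem_filter]
    tauto
  have hpk : ∀ k, p k * (Calpha N M w α k : ℝ) = w k / S := by
    intro k
    rw [hp]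
    have hk : (Calpha N M w α k : ℝ) ≠ 0 := by
      exact_mod_cast (hC k).ne'
    field_simp
  have hsum : ∑ 𝓜 ∈ F, ∑ j ∈ 𝓜, p j = 1 / S := by
    have h1 : ∀ 𝓜 ∈ F, ∑ j ∈ 𝓜, p j = ∑ k, if k ∈ 𝓜 then p k else 0 := by
      intro 𝓜 _
      rw [Finset.sum_ite_mem, Finset.univ_inter]
    rw [Finset.sum_congr rfl h1, Finset.sum_comm]
    have h2 : ∀ k : Fin N, (k ∈ (Finset.univ : Finset (Fin N))) →
        ∑ 𝓜 ∈ F, (if k ∈ 𝓜 then p k else 0) = w k / S := by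
      intro k _
      rw [key k, hpk k]
    rw [Finset.sum_congr rfl h2, ← Finset.sum_div, hwsum]
  have hCS : C = S := by
    rw [← Finset.mul_sum, hsum] at hnorm
    field_simp at hnorm
    linarith
  intro i
  have hterm : ∀ 𝓜 ∈ F, (C * ∑ j ∈ 𝓜, p j) *
      (if i ∈ 𝓜 then p i / ∑ j ∈ 𝓜, p j else 0)
      = if i ∈ 𝓜 then C * p i else 0 := by
    intro 𝓜 h𝓜
    have hcard : 𝓜.card = M := by
      have := Finset.mem_filter.mp h𝓜
      exact (Finset.mem_powersetCard.mp this.1).2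
    have hne : 𝓜.Nonempty := Finset.card_pos.mp (by omega)
    have hpos : 0 < ∑ j ∈ 𝓜, p j :=
      Finset.sum_pos (fun j _ => hppos j) hne
    by_cases h : i ∈ 𝓜
    · simp only [h, if_true]
      field_simp
    · simp [h]
  rw [Finset.sum_congr rfl hterm]
  have : ∑ 𝓜 ∈ F, (if i ∈ 𝓜 then C * p i else 0)
      = C * ∑ 𝓜 ∈ F, (if i ∈ 𝓜 then p i else 0) := by
    rw [Finset.mul_sum]
    apply Finset.sum_congr rfl
    intro 𝓜 _
    by_cases h : i ∈ 𝓜 <;> simp [h]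
  rw [this, key i, hpk i, hCS]
  field_simp
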